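/- Let N ≥ 1, let Δf > 0 and f_c be real numbers, and set f_n = f_c + nΔf for n ∈ {−N+1, …, N}. Let G ≥ 2N and let t₁, …, t_G be pairwise distinct real numbers satisfying max_v t_v − min_v t_v < 1/Δf. Let V be the G × 2N complex matrix with entries V[v, n] = exp(2πi f_n t_v), and let H be the 2N × 2N diagonal complex matrix with diagonal entries H^{−N+1}, …, H^{N}, all nonzero. Then rank(V · H) = 2N. -/
import Mathlib


open Complex

/-- Theorem 2 of the paper: the equivalent channel matrix `V · H`, where `V` is
the sampling matrix and `H` the diagonal frequency-domain channel matrix with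
nonzero subchannel gains, has full rank `2N`. -/
theorem equivalent_channel_rank
    (N G : ℕ) (hN : 1 ≤ N) (Δf fc : ℝ) (hΔf : 0 < Δf)
    (hG : 2 * N ≤ G)
    (t : Fin G → ℝ) (ht : Function.Injective t)
    (hspread : ∀ v w : Fin G, t v - t w < 1 / Δf)
    (H : Fin (2 * N) → ℂ) (hH : ∀ n, H n ≠ 0) :
    Matrix.rank
      ((Matrix.of fun (v : Fin G) (n : Fin (2 * N)) =>
        Complex.exp (2 * Real.pi * Complex.I *
          ((fc + (((n : ℕ) : ℝ) + 1 - (N : ℝ)) * Δf : ℝ) : ℂ) * ((t v : ℝ) : ℂ)))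
        * Matrix.diagonal H) = 2 * N := by
  set V : Matrix (Fin G) (Fin (2 * N)) ℂ :=
    Matrix.of fun (v : Fin G) (n : Fin (2 * N)) =>
      Complex.exp (2 * Real.pi * Complex.I *
        ((fc + (((n : ℕ) : ℝ) + 1 - (N : ℝ)) * Δf : ℝ) : ℂ) * ((t v : ℝ) : ℂ)) with hVdef
  set M : Matrix (Fin G) (Fin (2 * N)) ℂ := V * Matrix.diagonal H with hMdef
  have hle : M.rank ≤ 2 * N := by
    simpa using Matrix.rank_le_card_width M
  refine le_antisymm hle ?_
  -- row selection
  set e : Fin (2 * N) → Fin G := Fin.castLE hG with he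
  have heinj : Function.Injective e := Fin.castLE_injective hG
  set z : Fin (2 * N) → ℂ := fun i =>
    Complex.exp (2 * Real.pi * Complex.I * (Δf : ℂ) * ((t (e i) : ℝ) : ℂ)) with hz
  set c : Fin (2 * N) → ℂ := fun i =>
    Complex.exp (2 * Real.pi * Complex.I *
      ((fc + (1 - (N : ℝ)) * Δf : ℝ) : ℂ) * ((t (e i) : ℝ) : ℂ)) with hc
  have hπ : (2 * (Real.pi : ℂ) * Complex.I) ≠ 0 := by
    simp [Real.pi_ne_zero, Complex.I_ne_zero, Complex.ofReal_ne_zero]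
  have hΔf0 : (Δf : ℂ) ≠ 0 := by
    exact_mod_cast Complex.ofReal_ne_zero.mpr (ne_of_gt hΔf)
  -- z is injective
  have hzinj : Function.Injective z := by
    intro a b hab
    rw [hz] at hab
    obtain ⟨k, hk⟩ := Complex.exp_eq_exp_iff_exists_int.mp hab
    have hk2 : (2 * (Real.pi : ℂ) * Complex.I) * ((Δf : ℂ) * ((t (e a) : ℝ) : ℂ)) =
        (2 * (Real.pi : ℂ) * Complex.I) * ((Δf : ℂ) * ((t (e b) : ℝ) : ℂ) + (k : ℂ)) := by
      linear_combination hk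
    have hk3 : (Δf : ℂ) * ((t (e a) : ℝ) : ℂ) = (Δf : ℂ) * ((t (e b) : ℝ) : ℂ) + (k : ℂ) :=
      mul_left_cancel₀ hπ hk2
    have hk4 : ((Δf * t (e a) : ℝ) : ℂ) = ((Δf * t (e b) + (k : ℝ) : ℝ) : ℂ) := by
      push_cast
      linear_combination hk3
    have hk5 : Δf * t (e a) = Δf * t (e b) + (k : ℝ) := by exact_mod_cast hk4
    have hb1 : (k : ℝ) < 1 := by
      have := hspread (e a) (e b)
      have h1 : Δf * (t (e a) - t (e b)) < 1 := by
        rw [mul_comm]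
        have := (lt_div_iff₀ hΔf).mp this
        linarith
      nlinarith
    have hb2 : (-1 : ℝ) < (k : ℝ) := by
      have := hspread (e b) (e a)
      have h1 : Δf * (t (e b) - t (e a)) < 1 := by
        rw [mul_comm]
        have := (lt_div_iff₀ hΔf).mp this
        linarith
      nlinarith
    have hk0 : k = 0 := by
      have h1 : (k : ℝ) < 1 := hb1
      have h2 : (-1 : ℝ) < (k : ℝ) := hb2
      exact_mod_cast by
        have : k < 1 := by exact_mod_cast h1
        have : -1 < k := by exact_mod_cast h2
        omega
    rw [hk0] at hk5
    push_cast at hk5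
    have : t (e a) = t (e b) :=
      mul_left_cancel₀ (ne_of_gt hΔf) (by linarith : Δf * t (e a) = Δf * t (e b))
    exact heinj (ht this)
  -- the square submatrix of V factors as diagonal * vandermonde
  have hsub : V.submatrix e id = Matrix.diagonal c * Matrix.vandermonde z := by
    ext i n
    rw [Matrix.diagonal_mul, Matrix.vandermonde_apply, Matrix.submatrix_apply, hVdef]
    simp only [Matrix.of_apply, id, hz, hc]
    rw [← Complex.exp_nat_mul, ← Complex.exp_add]
    congr 1
    push_cast
    ring
  have hdetV : (V.submatrix e id).det ≠ 0 := by
    rw [hsub, Matrix.det_mul, Matrix.det_diagonal]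
    exact mul_ne_zero (Finset.prod_ne_zero_iff.mpr fun i _ => Complex.exp_ne_zero _)
      (Matrix.det_vandermonde_ne_zero_iff.mpr hzinj)
  have hdetS : (V.submatrix e id * Matrix.diagonal H).det ≠ 0 := by
    rw [Matrix.det_mul, Matrix.det_diagonal]
    exact mul_ne_zero hdetV (Finset.prod_ne_zero_iff.mpr fun i _ => hH i)
  have hsubM : M.submatrix e id = V.submatrix e id * Matrix.diagonal H := by
    rw [hMdef, Matrix.submatrix_mul _ _ _ _ id Function.bijective_id,
      Matrix.submatrix_id_id]
  have hranksub : (M.submatrix e id).rank = 2 * N := by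
    rw [hsubM]
    rw [Matrix.rank_of_isUnit _ ((Matrix.isUnit_iff_isUnit_det _).mpr (Ne.isUnit hdetS))]
    simp
  have hrow : M.submatrix e id = ((1 : Matrix (Fin G) (Fin G) ℂ).submatrix e id) * M := by
    ext i j
    simp [Matrix.mul_apply, Matrix.one_apply, Matrix.submatrix_apply]
  calc 2 * N = (M.submatrix e id).rank := hranksub.symm
    _ = (((1 : Matrix (Fin G) (Fin G) ℂ).submatrix e id) * M).rank := by rw [hrow]
    _ ≤ M.rank := Matrix.rank_mul_le_right _ _
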